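/- Let d ≥ 2, let C, D ∈ C^d_* be closed convex cones of positive dimension, and let x ∈ ℝ^d. Suppose there exists ε > 0 such that δ_a(C,D) ≤ π/2 − ε, d_a(x,C) ≤ π/2 − ε, and d_a(x,D) ≤ π/2 − ε. Then cos d_a(Π_C(x), Π_D(x)) ≥ 1 − c_ε · δ_a(C,D), where c_ε = 2(π^{−1} + tan(π/2 − ε)). -/

import Mathlib

open Set MeasureTheory
open scoped RealInnerProductSpace ENNReal NNReal

attribute [local instance] Classical.propDecidable

noncomputable section

/-- `ℝ^d` with its Euclidean structure. -/
abbrev Euc (d : ℕ) := EuclideanSpace ℝ (Fin d)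

/-- A closed convex cone (with apex `o`) in `ℝ^d`. -/
def IsClosedConvexCone {d : ℕ} (C : Set (Euc d)) : Prop :=
  C.Nonempty ∧ IsClosed C ∧ Convex ℝ C ∧ ∀ x ∈ C, ∀ r : ℝ, 0 ≤ r → r • x ∈ C

/-- A cone has positive dimension iff it contains a nonzero point. -/
def PosDim {d : ℕ} (C : Set (Euc d)) : Prop := ∃ x ∈ C, x ≠ 0

/-- The dual (polar) cone `C° = {x : ⟪x,y⟫ ≤ 0 ∀ y ∈ C}`. -/
def dualCone {d : ℕ} (C : Set (Euc d)) : Set (Euc d) :=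
  {x | ∀ y ∈ C, ⟪x, y⟫ ≤ 0}

/-- The metric projection (nearest point map) onto a set; junk value `0` if
no nearest point exists.  For a nonempty closed convex set this is the usual
(unique) nearest-point map. -/
def metricProj {d : ℕ} (C : Set (Euc d)) (x : Euc d) : Euc d :=
  if h : ∃ y ∈ C, ∀ z ∈ C, dist x y ≤ dist x z then h.choose else 0

/-- The angular distance `d_a(x, C) = arccos (‖Π_C x‖ / ‖x‖)` for `x ≠ o`,
and `d_a(o, C) = π/2`. -/
def angDist {d : ℕ} (C : Set (Euc d)) (x : Euc d) : ℝ :=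
  if x = 0 then Real.pi / 2 else Real.arccos (‖metricProj C x‖ / ‖x‖)

/-- The angular parallel set `C_λ^a = {x : d_a(x,C) ≤ λ}`. -/
def angParallel {d : ℕ} (C : Set (Euc d)) (l : ℝ) : Set (Euc d) :=
  {x | angDist C x ≤ l}

/-- The angular Hausdorff distance
`δ_a(C,D) = min {λ ≥ 0 : C ⊆ D_λ^a, D ⊆ C_λ^a}`. -/
def angHaus {d : ℕ} (C D : Set (Euc d)) : ℝ :=
  sInf {l : ℝ | 0 ≤ l ∧ C ⊆ angParallel D l ∧ D ⊆ angParallel C l}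

/-- The standard Gaussian measure `γ_d` on `ℝ^d`. -/
def stdGaussian (d : ℕ) : Measure (Euc d) :=
  volume.withDensity fun x =>
    ENNReal.ofReal ((2 * Real.pi) ^ (-(d : ℝ) / 2) * Real.exp (-‖x‖ ^ 2 / 2))

/-- The biconic σ-algebra on `ℝ^d × ℝ^d`: Borel sets invariant under
separate positive scaling of the two components. -/
def biconicMS (d : ℕ) : MeasurableSpace (Euc d × Euc d) where
  MeasurableSet' η := MeasurableSet η ∧
    ∀ p ∈ η, ∀ a b : ℝ, 0 < a → 0 < b → (a • p.1, b • p.2) ∈ η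
  measurableSet_empty := ⟨MeasurableSet.empty, fun p hp => absurd hp (notMem_empty p)⟩
  measurableSet_compl := by
    rintro η ⟨hm, hinv⟩
    refine ⟨hm.compl, ?_⟩
    rintro p hp a b ha hb hmem
    apply hp
    have h2 := hinv _ hmem a⁻¹ b⁻¹ (by positivity) (by positivity)
    simpa [smul_smul, inv_mul_cancel₀ ha.ne', inv_mul_cancel₀ hb.ne'] using h2
  measurableSet_iUnion := by
    rintro s hs
    refine ⟨MeasurableSet.iUnion fun i => (hs i).1, ?_⟩
    rintro p hp a b ha hb
    obtain ⟨i, hi⟩ := mem_iUnion.1 hp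
    exact mem_iUnion.2 ⟨i, (hs i).2 p hi a b ha hb⟩

/-- A polyhedral cone: a finite intersection of closed halfspaces with `o`
on their boundary. -/
def IsPolyhedralCone {d : ℕ} (C : Set (Euc d)) : Prop :=
  ∃ (n : ℕ) (u : Fin n → Euc d), C = {x | ∀ i, ⟪x, u i⟫ ≤ 0}

/-- A face of a cone `C`: either `C` itself or the intersection of `C` with a
supporting hyperplane of `C` through `o`. -/
def IsFaceOf {d : ℕ} (C F : Set (Euc d)) : Prop :=
  F = C ∨ ∃ u : Euc d, u ≠ 0 ∧ (∀ x ∈ C, ⟪u, x⟫ ≤ 0) ∧ F = C ∩ {x | ⟪u, x⟫ = 0}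

/-- Relative interior of a set containing `o` (relative to its linear span). -/
def relint {d : ℕ} (S : Set (Euc d)) : Set (Euc d) :=
  {x ∈ S | ∃ ε > 0, ∀ y ∈ (Submodule.span ℝ S : Set (Euc d)), dist y x < ε → y ∈ S}

/-- The `k`-skeleton of a polyhedral cone: the union of the relative interiors
of its `k`-dimensional faces. -/
def skel {d : ℕ} (C : Set (Euc d)) (k : ℕ) : Set (Euc d) :=
  ⋃ F ∈ {F | IsFaceOf C F ∧ Module.finrank ℝ (Submodule.span ℝ F) = k}, relint F

/-- The conic support measure
`Ω_k(C,η) = P{Π_C(g) ∈ skel_k C, (Π_C(g), Π_{C°}(g)) ∈ η}`. -/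
def conicSuppMeasure {d : ℕ} (C : Set (Euc d)) (k : ℕ) (η : Set (Euc d × Euc d)) : ℝ≥0∞ :=
  stdGaussian d {x | metricProj C x ∈ skel C k ∧
    (metricProj C x, metricProj (dualCone C) x) ∈ η}

/-- `φ_f(C,η) = E [f(‖Π_C g‖², ‖Π_{C°} g‖²) · 1_η (Π_C g, Π_{C°} g)]` for a
standard Gaussian vector `g`. -/
def phiF {d : ℕ} (C : Set (Euc d)) (f : ℝ → ℝ → ℝ) (η : Set (Euc d × Euc d)) : ℝ≥0∞ :=
  ∫⁻ x, ENNReal.ofReal (f (‖metricProj C x‖ ^ 2) (‖metricProj (dualCone C) x‖ ^ 2)) *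
      η.indicator (fun _ => (1 : ℝ≥0∞)) (metricProj C x, metricProj (dualCone C) x)
    ∂ stdGaussian d

/-- `ω_j = 2 π^{j/2} / Γ(j/2)`, the total spherical Lebesgue measure of `S^{j-1}`. -/
def sphVol (j : ℕ) : ℝ := 2 * Real.pi ^ ((j : ℝ) / 2) / Real.Gamma ((j : ℝ) / 2)

/-- The coefficient functions `g_k` of the conic Steiner formula:
`g_k(λ) = (ω_k ω_{d-k} / ω_d) ∫_0^λ cos^{k-1} φ sin^{d-k-1} φ dφ` for
`1 ≤ k ≤ d-1`, and `g_d ≡ 1`. -/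
def gcoef (d k : ℕ) (l : ℝ) : ℝ :=
  if k = d then 1
  else (sphVol k * sphVol (d - k) / sphVol d) *
    ∫ t in (0:ℝ)..l, Real.cos t ^ (k - 1) * Real.sin t ^ (d - k - 1)

/-- The angular local parallel set
`M_λ^a(C,η) = {x : d_a(x,C) ≤ λ, (Π_C x, Π_{C°} x) ∈ η}`. -/
def angLocParallel {d : ℕ} (C : Set (Euc d)) (l : ℝ) (η : Set (Euc d × Euc d)) : Set (Euc d) :=
  {x | angDist C x ≤ l ∧ (metricProj C x, metricProj (dualCone C) x) ∈ η}

/-- The homogeneous extension of a function on `S^{d-1} × S^{d-1}`: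
`f_h(x,y) = f(x/‖x‖, y/‖y‖)` for `x, y ≠ o`, and `0` otherwise. -/
def homExt {d : ℕ} (f : Metric.sphere (0 : Euc d) 1 × Metric.sphere (0 : Euc d) 1 → ℝ)
    (p : Euc d × Euc d) : ℝ :=
  if h : p.1 ≠ 0 ∧ p.2 ≠ 0 then
    f (⟨‖p.1‖⁻¹ • p.1, by
          rw [mem_sphere_zero_iff_norm, norm_smul, norm_inv, norm_norm]
          exact inv_mul_cancel₀ (norm_ne_zero_iff.mpr h.1)⟩,
       ⟨‖p.2‖⁻¹ • p.2, by
          rw [mem_sphere_zero_iff_norm, norm_smul, norm_inv, norm_norm]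
          exact inv_mul_cancel₀ (norm_ne_zero_iff.mpr h.2)⟩)
  else 0

/-- The angle between two vectors: `arccos ⟪x/‖x‖, y/‖y‖⟫` for `x, y ≠ o`,
with `d_a(o,o) = 0` and `d_a(x,o) = d_a(o,x) = π/2` for `x ≠ o`. -/
def vecAngle {d : ℕ} (x y : Euc d) : ℝ :=
  if x = 0 ∧ y = 0 then 0
  else if x = 0 ∨ y = 0 then Real.pi / 2
  else Real.arccos ⟪‖x‖⁻¹ • x, ‖y‖⁻¹ • y⟫

/-- Membership in the class `F_bL`: functions on `S^{d-1} × S^{d-1}` with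
Lipschitz constant `≤ 1` (w.r.t. the Euclidean norm on `ℝ^d × ℝ^d`) and
sup-norm `≤ 1`. -/
def memFbL {d : ℕ} (f : Metric.sphere (0 : Euc d) 1 × Metric.sphere (0 : Euc d) 1 → ℝ) : Prop :=
  (∀ a b, |f a - f b| ≤
    Real.sqrt (‖(a.1 : Euc d) - (b.1 : Euc d)‖ ^ 2 + ‖(a.2 : Euc d) - (b.2 : Euc d)‖ ^ 2)) ∧
  ∀ a, |f a| ≤ 1


lemma metricProj_mem_and_min {d : ℕ} {C : Set (Euc d)} (hC : IsClosedConvexCone C) (x : Euc d) :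
    metricProj C x ∈ C ∧ ∀ w ∈ C, ⟪x - metricProj C x, w - metricProj C x⟫ ≤ 0 := by
  obtain ⟨hne, hcl, hcv, hcone⟩ := hC
  obtain ⟨v, hvC, hv⟩ := exists_norm_eq_iInf_of_complete_convex hne hcl.isComplete hcv x
  have hbdd : BddBelow (Set.range fun w : C => ‖x - (w : Euc d)‖) :=
    ⟨0, by rintro r ⟨w, rfl⟩; exact norm_nonneg _⟩
  have hex : ∃ y ∈ C, ∀ z ∈ C, dist x y ≤ dist x z := by
    refine ⟨v, hvC, fun z hz => ?_⟩
    rw [dist_eq_norm, dist_eq_norm, hv]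
    exact ciInf_le hbdd ⟨z, hz⟩
  rw [metricProj, dif_pos hex]
  obtain ⟨hy, hmin⟩ := hex.choose_spec
  refine ⟨hy, ?_⟩
  haveI : Nonempty C := ⟨⟨hex.choose, hy⟩⟩
  have heq : ‖x - hex.choose‖ = ⨅ w : C, ‖x - (w : Euc d)‖ := by
    apply le_antisymm
    · refine le_ciInf fun w => ?_
      have := hmin w w.2
      rwa [dist_eq_norm, dist_eq_norm] at this
    · exact ciInf_le hbdd ⟨hex.choose, hy⟩
  exact (norm_eq_iInf_iff_real_inner_le_zero hcv hy).mp heq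

lemma IsClosedConvexCone.zero_mem {d : ℕ} {C : Set (Euc d)} (hC : IsClosedConvexCone C) :
    (0 : Euc d) ∈ C := by
  obtain ⟨c, hc⟩ := hC.1
  simpa using hC.2.2.2 c hc 0 le_rfl

lemma metricProj_spec {d : ℕ} {C : Set (Euc d)} (hC : IsClosedConvexCone C) (x : Euc d) :
    metricProj C x ∈ C ∧ ⟪x - metricProj C x, metricProj C x⟫ = 0 ∧
      ∀ w ∈ C, ⟪x - metricProj C x, w⟫ ≤ 0 := by
  obtain ⟨hmem, hvar⟩ := metricProj_mem_and_min hC x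
  set p := metricProj C x with hp
  have h2 : (2 : ℝ) • p ∈ C := hC.2.2.2 p hmem 2 (by norm_num)
  have e1 := hvar _ h2
  have e2 := hvar _ hC.zero_mem
  have h2p : (2:ℝ) • p - p = p := by
    rw [two_smul]; abel
  rw [h2p] at e1
  rw [zero_sub, inner_neg_right] at e2
  have horth : ⟪x - p, p⟫ = 0 := le_antisymm e1 (by linarith)
  refine ⟨hmem, horth, fun w hw => ?_⟩
  have := hvar w hw
  rw [inner_sub_right, horth] at this
  linarith

lemma metricProj_pyth {d : ℕ} {C : Set (Euc d)} (hC : IsClosedConvexCone C) (x : Euc d) :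
    ‖x‖ ^ 2 = ‖metricProj C x‖ ^ 2 + ‖x - metricProj C x‖ ^ 2 := by
  obtain ⟨-, horth, -⟩ := metricProj_spec hC x
  have : x = (x - metricProj C x) + metricProj C x := by abel
  calc ‖x‖ ^ 2 = ‖(x - metricProj C x) + metricProj C x‖ ^ 2 := by rw [← this]
    _ = ‖x - metricProj C x‖ ^ 2 + 2 * ⟪x - metricProj C x, metricProj C x⟫
          + ‖metricProj C x‖ ^ 2 := norm_add_sq_real _ _
    _ = ‖metricProj C x‖ ^ 2 + ‖x - metricProj C x‖ ^ 2 := by rw [horth]; ring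

lemma norm_metricProj_le {d : ℕ} {C : Set (Euc d)} (hC : IsClosedConvexCone C) (x : Euc d) :
    ‖metricProj C x‖ ≤ ‖x‖ := by
  have h := metricProj_pyth hC x
  nlinarith [norm_nonneg (x - metricProj C x), norm_nonneg x, norm_nonneg (metricProj C x)]

lemma angDist_nonneg {d : ℕ} (C : Set (Euc d)) (x : Euc d) : 0 ≤ angDist C x := by
  unfold angDist
  split
  · positivity
  · exact Real.arccos_nonneg _

lemma angDist_le_pi_div_two {d : ℕ} (C : Set (Euc d)) (x : Euc d) :
    angDist C x ≤ Real.pi / 2 := by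
  unfold angDist
  split
  · exact le_refl _
  · exact Real.arccos_le_pi_div_two.mpr (by positivity)

lemma angHaus_nonneg {d : ℕ} (C D : Set (Euc d)) : 0 ≤ angHaus C D :=
  le_csInf ⟨Real.pi / 2, by positivity,
      fun w _ => angDist_le_pi_div_two D w, fun w _ => angDist_le_pi_div_two C w⟩
    fun l hl => hl.1

lemma angDist_le_angHaus_left {d : ℕ} {C D : Set (Euc d)} {w : Euc d} (hw : w ∈ C) :
    angDist D w ≤ angHaus C D :=
  le_csInf ⟨Real.pi / 2, by positivity,
      fun v _ => angDist_le_pi_div_two D v, fun v _ => angDist_le_pi_div_two C v⟩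
    fun l hl => hl.2.1 hw

lemma angHaus_comm {d : ℕ} (C D : Set (Euc d)) : angHaus C D = angHaus D C := by
  unfold angHaus
  congr 1
  ext l
  simp only [Set.mem_setOf_eq]
  tauto

lemma vecAngle_comm {d : ℕ} (x y : Euc d) : vecAngle x y = vecAngle y x := by
  unfold vecAngle
  rw [real_inner_comm]
  by_cases hx : x = 0 <;> by_cases hy : y = 0 <;> simp [hx, hy]

lemma norm_le_of_angDist_le {d : ℕ} {C : Set (Euc d)} (hC : IsClosedConvexCone C)
    {x : Euc d} {t : ℝ} (hx : x ≠ 0) (ht : angDist C x ≤ t) (htpi : t ≤ Real.pi) :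
    ‖x‖ * Real.cos t ≤ ‖metricProj C x‖ := by
  have hxn : (0:ℝ) < ‖x‖ := norm_pos_iff.mpr hx
  have hr1 : ‖metricProj C x‖ / ‖x‖ ≤ 1 :=
    (div_le_one hxn).mpr (norm_metricProj_le hC x)
  have hr0 : (0:ℝ) ≤ ‖metricProj C x‖ / ‖x‖ := by positivity
  rw [angDist, if_neg hx] at ht
  have hcos : Real.cos t ≤ ‖metricProj C x‖ / ‖x‖ := by
    have := Real.cos_le_cos_of_nonneg_of_le_pi (Real.arccos_nonneg _) htpi ht
    rwa [Real.cos_arccos (by linarith) hr1] at this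
  calc ‖x‖ * Real.cos t ≤ ‖x‖ * (‖metricProj C x‖ / ‖x‖) := by
        exact mul_le_mul_of_nonneg_left hcos hxn.le
    _ = ‖metricProj C x‖ := by field_simp

set_option maxHeartbeats 1600000 in
lemma key_lemma {d : ℕ} (C D : Set (Euc d))
    (hC : IsClosedConvexCone C) (hD : IsClosedConvexCone D) (x : Euc d)
    (ε : ℝ) (hε : 0 < ε)
    (h1 : angHaus C D ≤ Real.pi / 2 - ε)
    (h2 : angDist C x ≤ Real.pi / 2 - ε)
    (h3 : angDist D x ≤ Real.pi / 2 - ε)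
    (hyz : ‖metricProj D x‖ ≤ ‖metricProj C x‖) :
    1 - 2 * (Real.pi⁻¹ + Real.tan (Real.pi / 2 - ε)) * angHaus C D ≤
      Real.cos (vecAngle (metricProj C x) (metricProj D x)) := by
  have hπ := Real.pi_pos
  have hL0 : 0 ≤ Real.pi / 2 - ε := le_trans (angDist_nonneg C x) h2
  have hεle : ε ≤ Real.pi / 2 := by linarith
  have hx : x ≠ 0 := by
    intro h
    rw [h, angDist, if_pos rfl] at h2
    linarith
  have hsinε : 0 < Real.sin ε := Real.sin_pos_of_pos_of_lt_pi hε (by linarith)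
  have hcosε : 0 ≤ Real.cos ε := Real.cos_nonneg_of_mem_Icc ⟨by linarith, hεle⟩
  have htan : Real.tan (Real.pi / 2 - ε) = Real.cos ε / Real.sin ε := by
    rw [Real.tan_eq_sin_div_cos, Real.sin_pi_div_two_sub, Real.cos_pi_div_two_sub]
  have htan0 : 0 ≤ Real.tan (Real.pi / 2 - ε) := htan ▸ div_nonneg hcosε hsinε.le
  have hδ0 : 0 ≤ angHaus C D := angHaus_nonneg C D
  have hxpos : (0:ℝ) < ‖x‖ := norm_pos_iff.mpr hx
  have hp_lb : ‖x‖ * Real.sin ε ≤ ‖metricProj C x‖ := by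
    have := norm_le_of_angDist_le hC hx h2 (by linarith)
    rwa [Real.cos_pi_div_two_sub] at this
  have hz_lb : ‖x‖ * Real.sin ε ≤ ‖metricProj D x‖ := by
    have := norm_le_of_angDist_le hD hx h3 (by linarith)
    rwa [Real.cos_pi_div_two_sub] at this
  have hppos : (0:ℝ) < ‖metricProj C x‖ := lt_of_lt_of_le (by positivity) hp_lb
  have hzpos : (0:ℝ) < ‖metricProj D x‖ := lt_of_lt_of_le (by positivity) hz_lb
  have hpne : metricProj C x ≠ 0 := norm_pos_iff.mp hppos
  have hzne : metricProj D x ≠ 0 := norm_pos_iff.mp hzpos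
  obtain ⟨hpC, hp_orth, hpC_le⟩ := metricProj_spec hC x
  obtain ⟨hzD, hz_orth, hzD_le⟩ := metricProj_spec hD x
  obtain ⟨hqD, hq_orth, -⟩ := metricProj_spec hD (metricProj C x)
  have hsδ : 0 ≤ Real.sin (angHaus C D) :=
    Real.sin_nonneg_of_nonneg_of_le_pi hδ0 (by linarith)
  have hcδ : 0 ≤ Real.cos (angHaus C D) :=
    Real.cos_nonneg_of_mem_Icc ⟨by linarith, by linarith⟩
  have hangq : angDist D (metricProj C x) ≤ angHaus C D := angDist_le_angHaus_left hpC
  have hq_lb : ‖metricProj C x‖ * Real.cos (angHaus C D) ≤ ‖metricProj D (metricProj C x)‖ :=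
    norm_le_of_angDist_le hD hpne hangq (by linarith)
  have hpythq := metricProj_pyth hD (metricProj C x)
  have hpythz := metricProj_pyth hD x
  have hsle : Real.sin (angHaus C D) ≤ angHaus C D := Real.sin_le hδ0
  have hsc := Real.sin_sq_add_cos_sq (angHaus C D)
  have hscε := Real.sin_sq_add_cos_sq ε
  set δ : ℝ := angHaus C D with hδdef
  set T : ℝ := Real.tan (Real.pi / 2 - ε) with hTdef
  set p : Euc d := metricProj C x with hpdef
  set z : Euc d := metricProj D x with hzdef
  set q : Euc d := metricProj D p with hqdef
  clear_value q
  clear_value z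
  clear_value p
  clear_value T
  clear_value δ
  clear hpdef hzdef hqdef hδdef hTdef h2 h3 hangq
  have hpq : ‖p - q‖ ≤ ‖p‖ * Real.sin δ := by
    have hq0 : (0:ℝ) ≤ ‖q‖ := norm_nonneg _
    have hsq : ‖p - q‖ ^ 2 ≤ (‖p‖ * Real.sin δ) ^ 2 := by
      nlinarith [mul_le_mul hq_lb hq_lb (mul_nonneg hppos.le hcδ) hq0, sq_nonneg ‖p‖]
    have := Real.sqrt_le_sqrt hsq
    rwa [Real.sqrt_sq (norm_nonneg _), Real.sqrt_sq (mul_nonneg hppos.le hsδ)] at this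
  have hxz : ‖x - z‖ ≤ ‖z‖ * (Real.cos ε / Real.sin ε) := by
    have hsq : (‖x - z‖ * Real.sin ε) ^ 2 ≤ (‖z‖ * Real.cos ε) ^ 2 := by
      nlinarith [mul_le_mul hz_lb hz_lb (mul_nonneg hxpos.le hsinε.le) hzpos.le,
        sq_nonneg ‖z‖, sq_nonneg (Real.sin ε)]
    have hmul : ‖x - z‖ * Real.sin ε ≤ ‖z‖ * Real.cos ε := by
      have := Real.sqrt_le_sqrt hsq
      rwa [Real.sqrt_sq (mul_nonneg (norm_nonneg _) hsinε.le),
        Real.sqrt_sq (mul_nonneg hzpos.le hcosε)] at this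
    rw [← mul_div_assoc, le_div_iff₀ hsinε]
    exact hmul
  have hxp : ⟪x, p⟫ = ‖p‖ ^ 2 := by
    have h := hp_orth
    rw [inner_sub_left, sub_eq_zero] at h
    rw [h, real_inner_self_eq_norm_sq]
  have hip : ‖p‖ ^ 2 - ‖p - q‖ * ‖x - z‖ ≤ ⟪p, z⟫ := by
    have hq_le : ⟪q, x - z⟫ ≤ 0 := by
      rw [real_inner_comm]
      exact hzD_le q hqD
    have hcs : ⟪p - q, x - z⟫ ≤ ‖p - q‖ * ‖x - z‖ := real_inner_le_norm _ _
    have hd1 : ⟪p, x - z⟫ = ⟪q, x - z⟫ + ⟪p - q, x - z⟫ := by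
      rw [← inner_add_left]
      congr 1
      abel
    have hd2 : ⟪p, x - z⟫ = ⟪p, x⟫ - ⟪p, z⟫ := inner_sub_right _ _ _
    have hcomm2 : ⟪p, x⟫ = ⟪x, p⟫ := real_inner_comm _ _
    linarith
  have hB : Real.sin δ * (Real.cos ε / Real.sin ε) ≤ 2 * (Real.pi⁻¹ + T) * δ := by
    have hpinv : (0:ℝ) < Real.pi⁻¹ := by positivity
    rw [← htan]
    nlinarith [mul_le_mul_of_nonneg_right hsle htan0]
  have hA : ‖p - q‖ * ‖x - z‖ ≤ (‖p‖ * ‖z‖) * (Real.sin δ * (Real.cos ε / Real.sin ε)) := by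
    calc ‖p - q‖ * ‖x - z‖
        ≤ (‖p‖ * Real.sin δ) * (‖z‖ * (Real.cos ε / Real.sin ε)) :=
          mul_le_mul hpq hxz (norm_nonneg _) (mul_nonneg hppos.le hsδ)
      _ = (‖p‖ * ‖z‖) * (Real.sin δ * (Real.cos ε / Real.sin ε)) := by ring
  have final_ineq : (1 - 2 * (Real.pi⁻¹ + T) * δ) * (‖p‖ * ‖z‖) ≤ ⟪p, z⟫ := by
    have hpz : (0:ℝ) < ‖p‖ * ‖z‖ := mul_pos hppos hzpos
    have h5 : (‖p‖ * ‖z‖) * (Real.sin δ * (Real.cos ε / Real.sin ε)) ≤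
        (‖p‖ * ‖z‖) * (2 * (Real.pi⁻¹ + T) * δ) :=
      mul_le_mul_of_nonneg_left hB hpz.le
    have h6 : ‖p‖ * ‖z‖ ≤ ‖p‖ * ‖p‖ := mul_le_mul_of_nonneg_left hyz hppos.le
    nlinarith [hip, hA, h5, h6]
  have hcond1 : ¬(p = 0 ∧ z = 0) := fun h => hpne h.1
  have hcond2 : ¬(p = 0 ∨ z = 0) := by
    rintro (h | h)
    exacts [hpne h, hzne h]
  unfold vecAngle
  rw [if_neg hcond1, if_neg hcond2, real_inner_smul_left, real_inner_smul_right]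
  have habs : |‖p‖⁻¹ * (‖z‖⁻¹ * ⟪p, z⟫)| ≤ 1 := by
    rw [abs_mul, abs_mul, abs_inv, abs_inv, abs_norm, abs_norm]
    calc ‖p‖⁻¹ * (‖z‖⁻¹ * |⟪p, z⟫|) ≤ ‖p‖⁻¹ * (‖z‖⁻¹ * (‖p‖ * ‖z‖)) := by
          gcongr
          exact abs_real_inner_le_norm _ _
      _ = 1 := by field_simp
  rw [Real.cos_arccos (abs_le.mp habs).1 (abs_le.mp habs).2]
  have hfin := (le_div_iff₀ (mul_pos hppos hzpos)).mpr final_ineq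
  calc 1 - 2 * (Real.pi⁻¹ + T) * δ ≤ ⟪p, z⟫ / (‖p‖ * ‖z‖) := hfin
    _ = ‖p‖⁻¹ * (‖z‖⁻¹ * ⟪p, z⟫) := by
        rw [div_eq_mul_inv, mul_inv]
        ring

/-- If `δ_a(C,D) ≤ π/2 − ε`, `d_a(x,C) ≤ π/2 − ε` and
`d_a(x,D) ≤ π/2 − ε` for some `ε > 0`, then
`cos d_a(Π_C x, Π_D x) ≥ 1 − c_ε δ_a(C,D)` with
`c_ε = 2 (π⁻¹ + tan(π/2 − ε))`. -/
theorem cos_vecAngle_metricProj_ge {d : ℕ} (hd : 2 ≤ d) (C D : Set (Euc d))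
    (hC : IsClosedConvexCone C) (hCp : PosDim C)
    (hD : IsClosedConvexCone D) (hDp : PosDim D) (x : Euc d)
    (ε : ℝ) (hε : 0 < ε)
    (h1 : angHaus C D ≤ Real.pi / 2 - ε)
    (h2 : angDist C x ≤ Real.pi / 2 - ε)
    (h3 : angDist D x ≤ Real.pi / 2 - ε) :
    1 - 2 * (Real.pi⁻¹ + Real.tan (Real.pi / 2 - ε)) * angHaus C D ≤
      Real.cos (vecAngle (metricProj C x) (metricProj D x)) := by
  rcases le_total ‖metricProj D x‖ ‖metricProj C x‖ with h | h
  · exact key_lemma C D hC hD x ε hε h1 h2 h3 h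
  · have := key_lemma D C hD hC x ε hε (by rwa [angHaus_comm D C]) h3 h2 h
    rwa [angHaus_comm D C, vecAngle_comm (metricProj D x) (metricProj C x)] at this
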